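/- Let $\Lambda$ be a finite dimensional algebra over a field, with infinite dominant dimension witnessed by a minimal injective resolution $0 \to {}_\Lambda\Lambda \to Q_0 \to Q_1 \to \cdots$ with maps $f_i: Q_i \to Q_{i+1}$ and all $Q_i$ projective. If for some $d \ge 0$ the kernel of $f_{d+1}$ has projective dimension at most $d$, then $\Lambda$ is a direct summand of $Q_0$, hence ${}_\Lambda\Lambda$ is injective. -/

import Mathlib

set_option synthInstance.maxHeartbeats 1000000
set_option maxHeartbeats 1000000

universe u v

/-- `pdLE R n M` means the left `R`-module `M` has projective dimension at most `n`,
i.e. it admits a projective resolution of length `n`. -/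
def pdLE (R : Type u) [Ring R] : ℕ → (M : Type v) → [AddCommGroup M] → [Module R M] → Prop
  | 0, M, _, _ => Module.Projective R M
  | n + 1, M, _, _ =>
      ∃ (P : Type v) (_ : AddCommGroup P) (_ : Module R P) (f : P →ₗ[R] M),
        Module.Projective R P ∧ Function.Surjective f ∧ pdLE R n (LinearMap.ker f)

/-- `M` has finite projective dimension over `R`. -/
def HasFinitePd (R : Type u) [Ring R] (M : Type v) [AddCommGroup M] [Module R M] : Prop :=
  ∃ n, pdLE R n M

section Aux

variable {R : Type u} [Ring R]

theorem pdLE_of_equiv {n : ℕ} {M N : Type v} [AddCommGroup M] [Module R M]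
    [AddCommGroup N] [Module R N] (e : M ≃ₗ[R] N) (h : pdLE R n M) : pdLE R n N := by
  induction n generalizing M N with
  | zero => haveI : Module.Projective R M := h; exact Module.Projective.of_equiv e
  | succ n ih =>
    obtain ⟨P, _, _, g, hP, hsurj, hker⟩ := h
    refine ⟨P, inferInstance, inferInstance, e.toLinearMap.comp g, hP,
      e.surjective.comp hsurj, ?_⟩
    have hkeq : LinearMap.ker (e.toLinearMap.comp g) = LinearMap.ker g := by
      rw [LinearMap.ker_comp, LinearEquiv.ker, Submodule.comap_bot]
    exact ih (LinearEquiv.ofEq _ _ hkeq.symm) hker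

theorem pdLE_prod {n : ℕ} {M P : Type v} [AddCommGroup M] [Module R M]
    [AddCommGroup P] [Module R P] (hM : pdLE R n M) (hP : Module.Projective R P) :
    pdLE R n (M × P) := by
  cases n with
  | zero =>
    haveI : Module.Projective R M := hM; haveI := hP
    exact (inferInstance : Module.Projective R (M × P))
  | succ n =>
    obtain ⟨P', _, _, g, hP', hsurj, hker⟩ := hM
    refine ⟨P' × P, inferInstance, inferInstance,
      g.prodMap (LinearMap.id : P →ₗ[R] P), (haveI := hP'; haveI := hP; inferInstance),
      hsurj.prodMap Function.surjective_id, ?_⟩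
    have e : LinearMap.ker g ≃ₗ[R]
        LinearMap.ker (g.prodMap (LinearMap.id : P →ₗ[R] P)) :=
      { toFun := fun x => ⟨(x.1, 0), by
          simp [LinearMap.mem_ker, Prod.ext_iff, x.2]⟩
        map_add' := fun x y => by ext <;> simp
        map_smul' := fun c x => by ext <;> simp
        invFun := fun y => ⟨y.1.1, by
          have := y.2
          simp only [LinearMap.mem_ker, LinearMap.prodMap_apply, LinearMap.id_apply,
            Prod.ext_iff, Prod.fst_zero, Prod.snd_zero] at this
          exact this.1⟩
        left_inv := fun x => by ext; rfl
        right_inv := fun y => by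
          have := y.2
          simp only [LinearMap.mem_ker, LinearMap.prodMap_apply, LinearMap.id_apply,
            Prod.ext_iff, Prod.fst_zero, Prod.snd_zero] at this
          ext
          · rfl
          · exact this.2.symm }
    exact pdLE_of_equiv e hker

/-- A surjection onto a projective module splits the total module. -/
theorem split_equiv {X B : Type v} [AddCommGroup X] [Module R X] [AddCommGroup B] [Module R B]
    (π : X →ₗ[R] B) (hB : Module.Projective R B) (hs : Function.Surjective π) :
    Nonempty (X ≃ₗ[R] B × LinearMap.ker π) := by
  haveI := hB
  obtain ⟨s, hs2⟩ := Module.projective_lifting_property π LinearMap.id hs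
  have hsp : ∀ b, π (s b) = b := fun b => DFunLike.congr_fun hs2 b
  refine ⟨{ toFun := fun x => (π x, ⟨x - s (π x), by simp [LinearMap.mem_ker, hsp]⟩)
            map_add' := fun x y => by ext <;> simp <;> abel
            map_smul' := fun c x => by ext <;> simp [smul_sub]
            invFun := fun y => s y.1 + y.2.1
            left_inv := fun x => by simp
            right_inv := fun y => by
              have h2 : π y.2.1 = 0 := y.2.2
              ext
              · simp [hsp, h2]
              · simp [hsp, h2] }⟩

/-- Schanuel's lemma. -/
theorem schanuel {M P P' : Type v} [AddCommGroup M] [Module R M] [AddCommGroup P] [Module R P]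
    [AddCommGroup P'] [Module R P'] (f : P →ₗ[R] M) (f' : P' →ₗ[R] M)
    (hP : Module.Projective R P) (hP' : Module.Projective R P')
    (hf : Function.Surjective f) (hf' : Function.Surjective f') :
    Nonempty ((LinearMap.ker f × P') ≃ₗ[R] (LinearMap.ker f' × P)) := by
  set D : (P × P') →ₗ[R] M := f.comp (LinearMap.fst R P P') - f'.comp (LinearMap.snd R P P')
    with hD
  have hDapply : ∀ x : P × P', D x = f x.1 - f' x.2 := fun x => rfl
  set X := LinearMap.ker D with hX
  -- the two projections
  set π₁ : X →ₗ[R] P := (LinearMap.fst R P P').comp X.subtype with hπ₁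
  set π₂ : X →ₗ[R] P' := (LinearMap.snd R P P').comp X.subtype with hπ₂
  have hπ₁s : Function.Surjective π₁ := by
    intro p
    obtain ⟨p', hp'⟩ := hf' (f p)
    exact ⟨⟨(p, p'), show D (p, p') = 0 by rw [hDapply]; rw [hp']; simp⟩, rfl⟩
  have hπ₂s : Function.Surjective π₂ := by
    intro p'
    obtain ⟨p, hp⟩ := hf (f' p')
    exact ⟨⟨(p, p'), show D (p, p') = 0 by rw [hDapply]; rw [hp]; simp⟩, rfl⟩
  -- kernels of the projections
  have e₁ : LinearMap.ker π₁ ≃ₗ[R] LinearMap.ker f' :=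
    { toFun := fun x => ⟨x.1.1.2, by
        have h1 : f x.1.1.1 - f' x.1.1.2 = 0 := x.1.2
        have h2 : x.1.1.1 = 0 := x.2
        rw [h2, map_zero, zero_sub, neg_eq_zero] at h1
        exact h1⟩
      map_add' := fun x y => rfl
      map_smul' := fun c x => rfl
      invFun := fun k => ⟨⟨(0, k.1), show D (0, k.1) = 0 by
        rw [hDapply]; have := k.2; simp only [LinearMap.mem_ker] at this; simp [this]⟩, rfl⟩
      left_inv := fun x => by
        have h2 : x.1.1.1 = 0 := x.2
        ext
        · exact h2.symm
        · rfl
      right_inv := fun k => rfl }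
  have e₂ : LinearMap.ker π₂ ≃ₗ[R] LinearMap.ker f :=
    { toFun := fun x => ⟨x.1.1.1, by
        have h1 : f x.1.1.1 - f' x.1.1.2 = 0 := x.1.2
        have h2 : x.1.1.2 = 0 := x.2
        rw [h2, map_zero, sub_zero] at h1
        exact h1⟩
      map_add' := fun x y => rfl
      map_smul' := fun c x => rfl
      invFun := fun k => ⟨⟨(k.1, 0), show D (k.1, 0) = 0 by
        rw [hDapply]; have := k.2; simp only [LinearMap.mem_ker] at this; simp [this]⟩, rfl⟩
      left_inv := fun x => by
        have h2 : x.1.1.2 = 0 := x.2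
        ext
        · rfl
        · exact h2.symm
      right_inv := fun k => rfl }
  obtain ⟨E₁⟩ := split_equiv π₁ hP hπ₁s
  obtain ⟨E₂⟩ := split_equiv π₂ hP' hπ₂s
  exact ⟨(LinearEquiv.prodComm R _ _).trans <|
    ((LinearEquiv.refl R P').prodCongr e₂.symm).trans <|
    E₂.symm.trans <| E₁.trans <|
    ((LinearEquiv.refl R P).prodCongr e₁).trans (LinearEquiv.prodComm R _ _)⟩

/-- Stable version of `pdLE`. -/
def pdLE' (R : Type u) [Ring R] (n : ℕ) (M : Type v) [AddCommGroup M] [Module R M] : Prop :=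
  ∃ (P : Type v) (_ : AddCommGroup P) (_ : Module R P),
    Module.Projective R P ∧ pdLE R n (M × P)

theorem punit_projective : Module.Projective R PUnit.{v+1} :=
  ⟨⟨0, fun m => Subsingleton.elim _ _⟩⟩

theorem pdLE'_of_pdLE {n : ℕ} {M : Type v} [AddCommGroup M] [Module R M]
    (h : pdLE R n M) : pdLE' R n M :=
  ⟨PUnit, inferInstance, inferInstance, punit_projective, pdLE_prod h punit_projective⟩

theorem pdLE'_zero {A : Type v} [AddCommGroup A] [Module R A] (h : pdLE' R 0 A) :
    Module.Projective R A := by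
  obtain ⟨P, _, _, hP, hAP⟩ := h
  haveI : Module.Projective R (A × P) := hAP
  exact Module.Projective.of_split (LinearMap.inl R A P) (LinearMap.fst R A P) (by ext; simp)

theorem descent {n : ℕ} {A X B : Type v} [AddCommGroup A] [Module R A] [AddCommGroup X]
    [Module R X] [AddCommGroup B] [Module R B] (i : A →ₗ[R] X) (π : X →ₗ[R] B)
    (hi : Function.Injective i) (hX : Module.Projective R X)
    (hk : LinearMap.ker π = LinearMap.range i) (hπ : Function.Surjective π)
    (hB : pdLE R (n + 1) B) : pdLE' R n A := by
  obtain ⟨P', _, _, g, hP', hg, hker⟩ := hB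
  obtain ⟨e⟩ := schanuel π g hX hP' hπ hg
  have eA : A ≃ₗ[R] LinearMap.ker π :=
    (LinearEquiv.ofInjective i hi).trans (LinearEquiv.ofEq _ _ hk.symm)
  refine ⟨P', inferInstance, inferInstance, hP', ?_⟩
  have h1 : pdLE R n (LinearMap.ker g × X) := pdLE_prod hker hX
  exact pdLE_of_equiv ((eA.prodCongr (LinearEquiv.refl R P')).trans e).symm h1

theorem descent' {n : ℕ} {A X B : Type v} [AddCommGroup A] [Module R A] [AddCommGroup X]
    [Module R X] [AddCommGroup B] [Module R B] (i : A →ₗ[R] X) (π : X →ₗ[R] B)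
    (hi : Function.Injective i) (hX : Module.Projective R X)
    (hk : LinearMap.ker π = LinearMap.range i) (hπ : Function.Surjective π)
    (hB : pdLE' R (n + 1) B) : pdLE' R n A := by
  obtain ⟨P, _, _, hP, hBP⟩ := hB
  refine descent (i.prod 0) (π.prodMap (LinearMap.id : P →ₗ[R] P))
    (fun a b hab => hi (congrArg Prod.fst hab)) (haveI := hX; haveI := hP; inferInstance)
    ?_ (hπ.prodMap Function.surjective_id) hBP
  ext ⟨x, p⟩
  simp only [LinearMap.mem_ker, LinearMap.prodMap_apply, LinearMap.id_apply, Prod.ext_iff,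
    Prod.fst_zero, Prod.snd_zero, LinearMap.mem_range, LinearMap.prod_apply, Pi.prod,
    LinearMap.zero_apply]
  constructor
  · rintro ⟨hx, hp⟩
    have hx' : x ∈ LinearMap.ker π := hx
    rw [hk] at hx'
    obtain ⟨a, ha⟩ := hx'
    exact ⟨a, ha, hp.symm⟩
  · rintro ⟨a, ha, hp⟩
    refine ⟨?_, hp.symm⟩
    have hx : x ∈ LinearMap.range i := ⟨a, ha⟩
    rw [← hk] at hx
    exact hx

end Aux

/-- If `0 → Λ → Q 0 → Q 1 → ⋯` is a minimal injective resolution of a finite dimensional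
algebra `Λ` with all terms `Q i` projective, and for some `d` the kernel of `f (d+1)` has
projective dimension at most `d`, then `Λ` is a direct summand of `Q 0`; hence `Λ` is
self-injective. -/
theorem stmt9 (k : Type u) (Λ : Type u) [Field k] [Ring Λ] [Algebra k Λ]
    [FiniteDimensional k Λ]
    (Q : ℕ → Type u) [∀ i, AddCommGroup (Q i)] [∀ i, Module Λ (Q i)]
    (hQinj : ∀ i, Module.Injective Λ (Q i)) (hQproj : ∀ i, Module.Projective Λ (Q i))
    (ι : Λ →ₗ[Λ] Q 0) (f : ∀ i, Q i →ₗ[Λ] Q (i + 1))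
    (hι : Function.Injective ι)
    (hex0 : LinearMap.ker (f 0) = LinearMap.range ι)
    (hex : ∀ i, LinearMap.ker (f (i + 1)) = LinearMap.range (f i))
    -- minimality: each image is an essential submodule of the next term
    (hmin0 : ∀ N : Submodule Λ (Q 0), N ⊓ LinearMap.range ι = ⊥ → N = ⊥)
    (hmin : ∀ i, ∀ N : Submodule Λ (Q (i + 1)), N ⊓ LinearMap.range (f i) = ⊥ → N = ⊥)
    (d : ℕ) (hker : pdLE Λ d (LinearMap.ker (f (d + 1)))) :
    (∃ g : Q 0 →ₗ[Λ] Λ, g.comp ι = LinearMap.id) ∧ Module.Injective Λ Λ := by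
  classical
  -- the corestriction of `f i` onto `ker (f (i+1)) = range (f i)`
  have hmem : ∀ i (x : Q i), f i x ∈ LinearMap.ker (f (i + 1)) := by
    intro i x
    rw [hex i]
    exact LinearMap.mem_range_self _ x
  set π : ∀ i, Q i →ₗ[Λ] LinearMap.ker (f (i + 1)) :=
    fun i => LinearMap.codRestrict _ (f i) (hmem i) with hπdef
  have hπsurj : ∀ i, Function.Surjective (π i) := by
    intro i b
    have hb : (b : Q (i + 1)) ∈ LinearMap.range (f i) := by
      rw [← hex i]; exact b.2
    obtain ⟨x, hx⟩ := hb
    exact ⟨x, Subtype.ext hx⟩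
  have hπker : ∀ i, LinearMap.ker (π i) = LinearMap.ker (f i) := by
    intro i
    exact LinearMap.ker_codRestrict _ _ _
  -- descend projective dimension down to `ker (f 1)`
  have key : ∀ m : ℕ, pdLE' Λ m (LinearMap.ker (f (m + 1))) →
      Module.Projective Λ (LinearMap.ker (f 1)) := by
    intro m
    induction m with
    | zero => exact fun h => pdLE'_zero h
    | succ m ih =>
      intro h
      apply ih
      refine descent' (LinearMap.ker (f (m + 1))).subtype (π (m + 1))
        (Submodule.injective_subtype _) (hQproj (m + 1)) ?_ (hπsurj (m + 1)) h
      rw [hπker (m + 1), Submodule.range_subtype]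
  have hK1proj : Module.Projective Λ (LinearMap.ker (f 1)) :=
    key d (pdLE'_of_pdLE hker)
  -- split the sequence 0 → Λ → Q 0 → ker (f 1) → 0
  haveI := hK1proj
  obtain ⟨s, hs⟩ := Module.projective_lifting_property (π 0) LinearMap.id (hπsurj 0)
  have hsp : ∀ b, π 0 (s b) = b := fun b => DFunLike.congr_fun hs b
  have hmemr : ∀ x : Q 0, x - s (π 0 x) ∈ LinearMap.range ι := by
    intro x
    rw [← hex0, ← hπker 0]
    simp [LinearMap.mem_ker, hsp]
  set eΛ : Λ ≃ₗ[Λ] LinearMap.range ι := LinearEquiv.ofInjective ι hι with heΛ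
  set g : Q 0 →ₗ[Λ] Λ :=
    eΛ.symm.toLinearMap.comp
      (LinearMap.codRestrict (LinearMap.range ι) (LinearMap.id - s.comp (π 0)) hmemr) with hgdef
  have hg : g.comp ι = LinearMap.id := by
    apply LinearMap.ext
    intro a
    have h1 : π 0 (ι a) = 0 := by
      apply Subtype.ext
      show f 0 (ι a) = 0
      have : ι a ∈ LinearMap.ker (f 0) := by rw [hex0]; exact ⟨a, rfl⟩
      exact this
    have h2 : g (ι a) = eΛ.symm ⟨ι a, ⟨a, rfl⟩⟩ := by
      simp only [hgdef, LinearMap.comp_apply, LinearEquiv.coe_coe]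
      congr 1
      apply Subtype.ext
      simp [h1]
    rw [LinearMap.comp_apply, LinearMap.id_apply, h2, LinearEquiv.symm_apply_eq]
    apply Subtype.ext
    simp [heΛ]
  refine ⟨⟨g, hg⟩, ?_⟩
  constructor
  intro X Y _ _ _ _ F hF φ
  obtain ⟨h, hh⟩ := (hQinj 0).out F hF (ι.comp φ)
  refine ⟨g.comp h, fun x => ?_⟩
  have := hh x
  rw [LinearMap.comp_apply, this, LinearMap.comp_apply]
  exact DFunLike.congr_fun hg (φ x)
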